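/- (Lemma 7 of the appendix.) Let 2m+1 ≤ i ≤ n−1 and, for each j = 1, …, n, let x_j be a vector of k distinct locations of column j, with u_j the complementary vector of the remaining r−k locations of column j. Then H(Z_{x_{i−m}} | Z_{x_{i−2m:i−m−1}}, Z_{u_{i−2m:i}}) − H(Z_{x_{i−m}} | Z_{x_{1:i−m−1}}, Z_{u_{1:n}}) ≤ (n−2m−1) · r · k · log(1 + ξ²/(η(1+η))). -/

import Mathlib

open Finset

/-- Covariance matrix of the GP: kernel plus sensor noise on the diagonal. -/
noncomputable def SigmaMat {D : Type*} [DecidableEq D] (K : D → D → ℝ) (σn2 : ℝ) :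
    Matrix D D ℝ :=
  Matrix.of fun x y => K x y + if x = y then σn2 else 0

/-- Submatrix of covariances between the entries of two finsets of locations. -/
noncomputable def subMat {D : Type*} (Cov : Matrix D D ℝ) (a s : Finset D) :
    Matrix ↥a ↥s ℝ :=
  Matrix.of fun p q => Cov p.1 q.1

/-- Posterior covariance `Σ_{aa|s} = Σ_{aa} - Σ_{as} Σ_{ss}⁻¹ Σ_{sa}`. -/
noncomputable def postCov {D : Type*} [DecidableEq D] (Cov : Matrix D D ℝ) (a s : Finset D) :
    Matrix ↥a ↥a ℝ :=
  subMat Cov a a - subMat Cov a s * (subMat Cov s s)⁻¹ * subMat Cov s a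

/-- Gaussian conditional entropy `H(Z_a | Z_s) = (1/2) log((2πe)^{|a|} det Σ_{aa|s})`. -/
noncomputable def condEnt {D : Type*} [DecidableEq D] (Cov : Matrix D D ℝ) (a s : Finset D) : ℝ :=
  (1/2) * Real.log ((2 * Real.pi * Real.exp 1) ^ a.card * (postCov Cov a s).det)

/-- Gaussian joint entropy `H(Z_a)`. -/
noncomputable def ent {D : Type*} [DecidableEq D] (Cov : Matrix D D ℝ) (a : Finset D) : ℝ :=
  condEnt Cov a ∅

/-- Mutual information `I(Z_a ; Z_b) = H(Z_a) - H(Z_a | Z_b)`. -/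
noncomputable def mutInf {D : Type*} [DecidableEq D] (Cov : Matrix D D ℝ) (a b : Finset D) : ℝ :=
  ent Cov a - condEnt Cov a b

/-- Conditional mutual information `I(Z_a ; Z_b | Z_s) = H(Z_a | Z_s) - H(Z_a | Z_s, Z_b)`. -/
noncomputable def condMutInf {D : Type*} [DecidableEq D] (Cov : Matrix D D ℝ)
    (a b s : Finset D) : ℝ :=
  condEnt Cov a s - condEnt Cov a (s ∪ b)

/-- Posterior variance `Σ_{yy|A}` of a single location `y`. -/
noncomputable def postVar {D : Type*} [DecidableEq D] (Cov : Matrix D D ℝ) (y : D)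
    (A : Finset D) : ℝ :=
  postCov Cov {y} A ⟨y, Finset.mem_singleton_self y⟩ ⟨y, Finset.mem_singleton_self y⟩

/-- Concatenation `x_{i:j}` of the column selections from column `i` to column `j`. -/
def seg {D : Type*} [DecidableEq D] (x : ℕ → Finset D) (i j : ℕ) : Finset D :=
  (Finset.Icc i j).biUnion x

/-- The set of the `r` locations of column `i`. -/
def column {D : Type*} [Fintype D] (col : D → ℕ) (i : ℕ) : Finset D :=
  Finset.univ.filter (fun p => col p = i)

/-- The complementary vector `u_i` of unobserved locations of column `i` for a path `x`. -/
def ucomp {D : Type*} [Fintype D] [DecidableEq D] (col : D → ℕ) (x : ℕ → Finset D) :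
    ℕ → Finset D :=
  fun i => column col i \ x i

/-- A path selects, in every column `i = 1,…,n`, a vector of `k` distinct locations of
column `i`. -/
def IsPath {D : Type*} [Fintype D] (col : D → ℕ) (n k : ℕ) (x : ℕ → Finset D) : Prop :=
  ∀ i, 1 ≤ i → i ≤ n → x i ⊆ column col i ∧ (x i).card = k

section Lemma7Aux

open Matrix

variable {D : Type*} [Fintype D] [DecidableEq D]

lemma posDef_submatrix_of_injective {β : Type*} [DecidableEq D]
    [Fintype β] [DecidableEq β]
    {M : Matrix D D ℝ} (hM : M.PosDef) (f : β → D) (hf : Function.Injective f) :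
    (M.submatrix f f).PosDef := by
  refine Matrix.PosDef.of_dotProduct_mulVec_pos ?_ ?_
  · have h1 := hM.1
    unfold Matrix.IsHermitian at *
    rw [Matrix.conjTranspose_submatrix, h1]
  · intro x hx
    set y : D → ℝ := fun d => ∑ b : β, if d = f b then x b else 0 with hy
    have hyf : ∀ b, y (f b) = x b := by
      intro b
      rw [hy]
      simp only []
      rw [Finset.sum_eq_single b]
      · simp
      · intro b' _ hne
        rw [if_neg]
        intro h
        exact hne (hf h.symm)
      · intro h; exact absurd (Finset.mem_univ b) h
    have hy0 : y ≠ 0 := by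
      intro h
      apply hx
      funext b
      have := congrFun h (f b)
      rw [hyf b] at this
      simpa using this
    have hsx : (star x : β → ℝ) = x := by funext i; simp
    have hsy : (star y : D → ℝ) = y := by funext i; simp
    have hMy : M *ᵥ y = fun d => ∑ b, M d (f b) * x b := by
      funext d
      simp only [Matrix.mulVec, dotProduct, hy, Finset.mul_sum, mul_ite, mul_zero]
      rw [Finset.sum_comm]
      simp
    have key : dotProduct (star x) (M.submatrix f f *ᵥ x) = dotProduct (star y) (M *ᵥ y) := by
      rw [hsx, hsy, hMy]
      simp only [dotProduct, Matrix.mulVec, Matrix.submatrix_apply, hy]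
      simp only [Finset.sum_mul, ite_mul, zero_mul]
      rw [Finset.sum_comm]
      simp
    rw [key]
    exact hM.dotProduct_mulVec_pos hy0

lemma subMat_posDef {M0 : Matrix D D ℝ} (hS : M0.PosDef) (s : Finset D) :
    (subMat M0 s s).PosDef :=
  posDef_submatrix_of_injective hS _ Subtype.val_injective

noncomputable def subMatInvertible {M0 : Matrix D D ℝ} (hS : M0.PosDef) (s : Finset D) :
    Invertible (subMat M0 s s) :=
  Matrix.invertibleOfIsUnitDet _ (isUnit_iff_ne_zero.mpr (ne_of_gt (subMat_posDef hS s).det_pos))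

/-- equiv between sum of disjoint finsets and union -/
noncomputable def unionEquiv {s a : Finset D} (h : Disjoint s a) :
    (↥s ⊕ ↥a) ≃ ↥(s ∪ a) where
  toFun := Sum.elim (fun p => ⟨p.1, Finset.mem_union_left _ p.2⟩)
    (fun p => ⟨p.1, Finset.mem_union_right _ p.2⟩)
  invFun q := if hq : q.1 ∈ s then Sum.inl ⟨q.1, hq⟩ else
    Sum.inr ⟨q.1, by
      rcases Finset.mem_union.mp q.2 with h' | h'
      · exact absurd h' hq
      · exact h'⟩
  left_inv p := by
    rcases p with ⟨v, hv⟩ | ⟨v, hv⟩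
    · simp only [Sum.elim_inl]
      exact dif_pos hv
    · have hvs : v ∉ s := fun hs => (Finset.disjoint_left.mp h hs) hv
      simp only [Sum.elim_inr]
      exact dif_neg hvs
  right_inv q := by
    by_cases hq : q.1 ∈ s <;> simp [hq]

lemma subMat_union_submatrix {M0 : Matrix D D ℝ} {s a : Finset D} (h : Disjoint s a) :
    (subMat M0 (s ∪ a) (s ∪ a)).submatrix (unionEquiv h) (unionEquiv h) =
      Matrix.fromBlocks (subMat M0 s s) (subMat M0 s a) (subMat M0 a s) (subMat M0 a a) := by
  ext i j
  rcases i with i | i <;> rcases j with j | j <;> rfl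

lemma subMat_conjTranspose {M0 : Matrix D D ℝ} (hH : M0.IsHermitian) (a s : Finset D) :
    (subMat M0 a s)ᴴ = subMat M0 s a := by
  ext j i
  have h1 : M0ᴴ j.1 i.1 = M0 j.1 i.1 := by rw [hH.eq]
  have h2 : M0ᴴ j.1 i.1 = star (M0 i.1 j.1) := rfl
  simp only [Matrix.conjTranspose_apply, subMat, Matrix.of_apply]
  rw [← h2, h1]

lemma det_subMat_union {M0 : Matrix D D ℝ} (hS : M0.PosDef) {s a : Finset D}
    (h : Disjoint s a) :
    (subMat M0 (s ∪ a) (s ∪ a)).det = (subMat M0 s s).det * (postCov M0 a s).det := by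
  haveI := subMatInvertible hS s
  rw [← Matrix.det_submatrix_equiv_self (unionEquiv h), subMat_union_submatrix h,
    Matrix.det_fromBlocks₁₁, Matrix.invOf_eq_nonsing_inv]
  rfl

lemma postCov_posDef {M0 : Matrix D D ℝ} (hS : M0.PosDef) {a s : Finset D}
    (h : Disjoint s a) :
    (postCov M0 a s).PosDef := by
  haveI := subMatInvertible hS s
  have hAh : (subMat M0 s s).IsHermitian := (subMat_posDef hS s).1
  have hBH : (subMat M0 s a)ᴴ = subMat M0 a s := subMat_conjTranspose hS.1 s a
  have hBig : (Matrix.fromBlocks (subMat M0 s s) (subMat M0 s a) ((subMat M0 s a)ᴴ)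
      (subMat M0 a a)).PosDef := by
    rw [hBH, ← subMat_union_submatrix h]
    exact posDef_submatrix_of_injective (subMat_posDef hS _) _ (unionEquiv h).injective
  have hpc : postCov M0 a s =
      subMat M0 a a - (subMat M0 s a)ᴴ * (subMat M0 s s)⁻¹ * (subMat M0 s a) := by
    rw [hBH]; rfl
  refine Matrix.PosDef.of_dotProduct_mulVec_pos ?_ ?_
  · rw [hpc]
    show _ᴴ = _
    rw [Matrix.conjTranspose_sub, Matrix.conjTranspose_mul, Matrix.conjTranspose_mul,
      Matrix.conjTranspose_nonsing_inv, Matrix.conjTranspose_conjTranspose,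
      subMat_conjTranspose hS.1, hAh.eq, Matrix.mul_assoc]
  · intro x hx
    have hv : (-(((subMat M0 s s)⁻¹ * subMat M0 s a) *ᵥ x) ⊕ᵥ x) ≠ 0 := by
      intro h0
      apply hx
      funext i
      exact congrFun h0 (Sum.inr i)
    have h2 := hBig.dotProduct_mulVec_pos hv
    rw [Matrix.dotProduct_mulVec, Matrix.schur_complement_eq₁₁ (subMat M0 s a) (subMat M0 a a)
      _ _ hAh, neg_add_cancel, dotProduct_zero, zero_add] at h2
    rw [Matrix.dotProduct_mulVec, hpc]
    exact h2

noncomputable def singletonUnique (p : D) : Unique ↥({p} : Finset D) :=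
  ⟨⟨⟨p, Finset.mem_singleton_self p⟩⟩, fun q => Subtype.ext (Finset.mem_singleton.mp q.2)⟩

lemma postVar_pos {M0 : Matrix D D ℝ} (hS : M0.PosDef) {p : D} {A : Finset D} (hp : p ∉ A) :
    0 < postVar M0 p A := by
  haveI := singletonUnique p
  have hd : Disjoint A ({p} : Finset D) := by
    rw [Finset.disjoint_singleton_right]; exact hp
  have h := (postCov_posDef hS hd).det_pos
  rw [Matrix.det_unique] at h
  unfold postVar
  rwa [show (⟨p, Finset.mem_singleton_self p⟩ : ↥({p} : Finset D)) = default from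
    Subsingleton.elim _ _]

lemma postVar_empty (M0 : Matrix D D ℝ) (p : D) : postVar M0 p ∅ = M0 p p := by
  unfold postVar postCov
  simp [Matrix.mul_apply, subMat]

lemma postVar_singleton (M0 : Matrix D D ℝ) {p q : D} (hpq : p ≠ q) :
    postVar M0 p {q} = M0 p p - M0 p q * (M0 q q)⁻¹ * M0 q p := by
  haveI := singletonUnique q
  have hdq : (⟨q, Finset.mem_singleton_self q⟩ : ↥({q} : Finset D)) = default :=
    Subsingleton.elim _ _
  have hinv : (subMat M0 {q} {q})⁻¹ = Matrix.of fun _ _ => (M0 q q)⁻¹ := by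
    rw [Matrix.inv_def, Matrix.adjugate_subsingleton, Matrix.det_unique]
    ext i j
    have hi : i = default := Subsingleton.elim _ _
    have hj : j = default := Subsingleton.elim _ _
    subst hi; subst hj
    simp [Matrix.smul_apply, Matrix.one_apply, Ring.inverse_eq_inv', subMat]
    rw [← hdq]
  unfold postVar postCov
  simp [hinv, Matrix.mul_apply, Matrix.sub_apply, subMat, Fintype.sum_unique, ← hdq]

lemma posSemidef_entry_nonneg {n : Type*} [Fintype n] [DecidableEq n] {M : Matrix n n ℝ}
    (h : M.PosSemidef) (i : n) : 0 ≤ M i i := by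
  have h2 := h.dotProduct_mulVec_nonneg (Pi.single i 1)
  have : dotProduct (star (Pi.single i 1)) (M *ᵥ (Pi.single i 1 : n → ℝ)) = M i i := by
    simp [dotProduct, Matrix.mulVec, Pi.single_apply, mul_ite, ite_mul,
      Finset.sum_ite_eq, Finset.sum_ite_eq']
  rwa [this] at h2

lemma postVar_ge_noise {K : D → D → ℝ} {σn2 : ℝ} (hn : 0 ≤ σn2)
    (hKsymm : ∀ p q : D, K p q = K q p) (hKpsd : (Matrix.of K).PosSemidef)
    (hSpd : (SigmaMat K σn2).PosDef)
    {p : D} {C : Finset D} (hp : p ∉ C) :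
    σn2 ≤ postVar (SigmaMat K σn2) p C := by
  classical
  set Sg := SigmaMat K σn2 with hSgdef
  set N : Matrix D D ℝ := Matrix.of fun x y => K x y + if x = y ∧ x ≠ p then σn2 else 0 with hN
  have hNpsd : N.PosSemidef := by
    have : N = Matrix.of K + Matrix.diagonal (fun x => if x = p then 0 else σn2) := by
      ext x y
      by_cases hxy : x = y
      · subst hxy
        by_cases hxp : x = p <;>
          simp [hN, Matrix.diagonal_apply, hxp]
      · simp [hN, Matrix.diagonal_apply, hxy]
    rw [this]
    exact hKpsd.add (Matrix.PosSemidef.diagonal (by intro x; dsimp; split <;> simp [hn]))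
  have hNh : N.IsHermitian := by
    have : Nᴴ = N := by
      ext x y
      simp only [Matrix.conjTranspose_apply, hN, Matrix.of_apply, star_trivial]
      by_cases hxy : x = y
      · subst hxy; rfl
      · rw [hKsymm y x]
        congr 1
        simp [hxy, Ne.symm hxy, eq_comm]
    exact this
  have hdisj : Disjoint C ({p} : Finset D) := by
    rw [Finset.disjoint_singleton_right]; exact hp
  haveI := subMatInvertible hSpd C
  have hE3 : subMat N C C = subMat Sg C C := by
    ext q q'
    show K q.1 q'.1 + _ = K q.1 q'.1 + _
    congr 1
    by_cases h : q.1 = q'.1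
    · rw [if_pos ⟨h, fun hh => hp (hh ▸ q.2)⟩, if_pos h]
    · rw [if_neg (fun hh => h hh.1), if_neg h]
  have hE1 : subMat N C ({p} : Finset D) = subMat Sg C ({p} : Finset D) := by
    ext q q'
    have hqp : q.1 ≠ q'.1 := by
      have : q'.1 = p := Finset.mem_singleton.mp q'.2
      rw [this]; exact fun h => hp (h ▸ q.2)
    simp [subMat, hN, hSgdef, SigmaMat, hqp]
  have hE2 : subMat N ({p} : Finset D) C = subMat Sg ({p} : Finset D) C := by
    ext q' q
    have hqp : q'.1 ≠ q.1 := by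
      have : q'.1 = p := Finset.mem_singleton.mp q'.2
      rw [this]; exact fun h => hp (h.symm ▸ q.2)
    simp [subMat, hN, hSgdef, SigmaMat, hqp]
  have hBH : (subMat N C ({p} : Finset D))ᴴ = subMat N ({p} : Finset D) C :=
    subMat_conjTranspose hNh _ _
  have hBig : (Matrix.fromBlocks (subMat N C C) (subMat N C ({p} : Finset D))
      ((subMat N C ({p} : Finset D))ᴴ) (subMat N ({p} : Finset D) ({p} : Finset D))).PosSemidef := by
    rw [hBH, ← subMat_union_submatrix hdisj]
    exact (hNpsd.submatrix _).submatrix _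
  rw [hE3] at hBig
  have hInv : Invertible (subMat N C C) := by rw [hE3]; infer_instance
  have hSchur := (Matrix.PosDef.fromBlocks₁₁ (subMat N C ({p} : Finset D))
    (subMat N ({p} : Finset D) ({p} : Finset D)) (subMat_posDef hSpd C)).mp hBig
  set z : ↥({p} : Finset D) := ⟨p, Finset.mem_singleton_self p⟩ with hz
  have hzero := posSemidef_entry_nonneg hSchur z
  have hkey : postVar Sg p C =
      (subMat N ({p} : Finset D) ({p} : Finset D) -
        (subMat N C ({p} : Finset D))ᴴ * (subMat Sg C C)⁻¹ * subMat N C ({p} : Finset D)) z z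
      + σn2 := by
    unfold postVar postCov
    rw [hBH, hE2, hE1]
    simp only [Matrix.sub_apply]
    have h1 : subMat Sg ({p} : Finset D) ({p} : Finset D) z z =
        subMat N ({p} : Finset D) ({p} : Finset D) z z + σn2 := by
      simp [subMat, hSgdef, hN, SigmaMat, hz]
    rw [h1]
    ring
  rw [hkey]
  linarith

lemma SigmaMat_posDef {K : D → D → ℝ} {σn2 : ℝ} (hKpsd : (Matrix.of K).PosSemidef)
    (hn : 0 < σn2) : (SigmaMat K σn2).PosDef := by
  have h1 : SigmaMat K σn2 = Matrix.of K + Matrix.diagonal (fun _ => σn2) := by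
    ext x y
    by_cases h : x = y <;> simp [SigmaMat, Matrix.diagonal_apply, h]
  rw [h1]
  exact Matrix.PosDef.posSemidef_add hKpsd
    (Matrix.PosDef.diagonal (fun _ => hn))

lemma condEnt_singleton (M0 : Matrix D D ℝ) (p : D) (C : Finset D) :
    condEnt M0 {p} C = (1/2) * Real.log ((2*Real.pi*Real.exp 1) * postVar M0 p C) := by
  haveI := singletonUnique p
  unfold condEnt
  rw [Finset.card_singleton, pow_one, Matrix.det_unique]
  unfold postVar
  rw [show (default : ↥({p} : Finset D)) = ⟨p, Finset.mem_singleton_self p⟩ from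
    Subsingleton.elim _ _]

lemma two_pi_e_pos : (0:ℝ) < 2 * Real.pi * Real.exp 1 := by
  positivity

section Pair

variable {K : D → D → ℝ} {σs2 σn2 ξ : ℝ}

lemma pair_lemma
    (hs : 0 < σs2) (hn : 0 < σn2) (hξ0 : 0 ≤ ξ)
    (hKsymm : ∀ p q : D, K p q = K q p) (hKpsd : (Matrix.of K).PosSemidef)
    (hKdiag : ∀ p : D, K p p = σs2)
    (hsub : ∀ (p q : D) (A : Finset D), p ∉ A → q ∉ A → p ≠ q →
      postVar (SigmaMat K σn2) p A - postVar (SigmaMat K σn2) p (insert q A)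
        ≤ postVar (SigmaMat K σn2) p ∅ - postVar (SigmaMat K σn2) p {q})
    {p q : D} {C : Finset D} (hp : p ∉ C) (hq : q ∉ C) (hpq : p ≠ q)
    (hK : |K p q| ≤ σs2 * ξ) :
    condEnt (SigmaMat K σn2) {p} C - condEnt (SigmaMat K σn2) {p} (C ∪ {q})
      ≤ (1/2) * Real.log (1 + ξ^2 / ((σn2/σs2)*(1+σn2/σs2))) := by
  have hSpd : (SigmaMat K σn2).PosDef := SigmaMat_posDef hKpsd hn
  set Sg := SigmaMat K σn2 with hSg
  have hpn : p ∉ C ∪ {q} := by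
    simp only [Finset.mem_union, Finset.mem_singleton]
    rintro (h | h)
    exacts [hp h, hpq h]
  set v1 := postVar Sg p C with hv1
  set v2 := postVar Sg p (C ∪ {q}) with hv2
  have hv1pos : 0 < v1 := postVar_pos hSpd hp
  have hv2pos : 0 < v2 := postVar_pos hSpd hpn
  have hv2n : σn2 ≤ v2 := postVar_ge_noise hn.le hKsymm hKpsd hSpd hpn
  have hempty : postVar Sg p ∅ = σs2 + σn2 := by
    rw [postVar_empty]
    simp [hSg, SigmaMat, hKdiag]
  have hsingle : postVar Sg p {q} = (σs2 + σn2) - K p q * ((σs2+σn2))⁻¹ * K p q := by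
    rw [postVar_singleton _ hpq]
    have e1 : Sg p p = σs2 + σn2 := by simp [hSg, SigmaMat, hKdiag]
    have e2 : Sg q q = σs2 + σn2 := by simp [hSg, SigmaMat, hKdiag]
    have e3 : Sg p q = K p q := by simp [hSg, SigmaMat, hpq]
    have e4 : Sg q p = K p q := by
      simp [hSg, SigmaMat, Ne.symm hpq]
      exact (hKsymm q p)
    rw [e1, e2, e3, e4]
  have hss : 0 < σs2 + σn2 := by linarith
  have hΔ : v1 - v2 ≤ (σs2 * ξ)^2 / (σs2 + σn2) := by
    have h1 := hsub p q C hp hq hpq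
    rw [show insert q C = C ∪ {q} by rw [Finset.insert_eq, Finset.union_comm]] at h1
    rw [hempty, hsingle] at h1
    have hKsq : K p q * (σs2+σn2)⁻¹ * K p q ≤ (σs2*ξ)^2 / (σs2+σn2) := by
      rw [div_eq_mul_inv]
      have : K p q * (σs2+σn2)⁻¹ * K p q = (K p q)^2 * (σs2+σn2)⁻¹ := by ring
      rw [this]
      have h2 : (K p q)^2 ≤ (σs2*ξ)^2 := by
        rw [← sq_abs (K p q)]
        exact pow_le_pow_left₀ (abs_nonneg _) hK 2
      exact mul_le_mul_of_nonneg_right h2 (by positivity)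
    calc v1 - v2 ≤ (σs2 + σn2) - ((σs2 + σn2) - K p q * ((σs2+σn2))⁻¹ * K p q) := h1
      _ = K p q * (σs2+σn2)⁻¹ * K p q := by ring
      _ ≤ (σs2*ξ)^2 / (σs2 + σn2) := hKsq
  have hratio : v1 / v2 ≤ 1 + ξ^2 / ((σn2/σs2)*(1+σn2/σs2)) := by
    have hX : (0:ℝ) ≤ (σs2*ξ)^2 / (σs2 + σn2) := by positivity
    have h3 : (v1 - v2)/v2 ≤ ((σs2*ξ)^2/(σs2+σn2))/σn2 :=
      div_le_div₀ hX hΔ hn hv2n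
    have h4 : v1 / v2 = 1 + (v1 - v2)/v2 := by field_simp; ring
    have h5 : ((σs2*ξ)^2/(σs2+σn2))/σn2 = ξ^2 / ((σn2/σs2)*(1+σn2/σs2)) := by
      field_simp
    rw [h4, ← h5]
    linarith
  rw [condEnt_singleton, condEnt_singleton, ← hv1, ← hv2]
  have hc0 : (0:ℝ) < 2 * Real.pi * Real.exp 1 := two_pi_e_pos
  rw [Real.log_mul (ne_of_gt hc0) (ne_of_gt hv1pos),
    Real.log_mul (ne_of_gt hc0) (ne_of_gt hv2pos)]
  have h6 : Real.log v1 - Real.log v2 ≤ Real.log (1 + ξ^2 / ((σn2/σs2)*(1+σn2/σs2))) := by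
    rw [← Real.log_div (ne_of_gt hv1pos) (ne_of_gt hv2pos)]
    exact Real.log_le_log (by positivity) hratio
  linarith [h6]

lemma chain_a
    (hs : 0 < σs2) (hn : 0 < σn2) (hξ0 : 0 ≤ ξ)
    (hKsymm : ∀ p q : D, K p q = K q p) (hKpsd : (Matrix.of K).PosSemidef)
    (hKdiag : ∀ p : D, K p p = σs2)
    (hsub : ∀ (p q : D) (A : Finset D), p ∉ A → q ∉ A → p ≠ q →
      postVar (SigmaMat K σn2) p A - postVar (SigmaMat K σn2) p (insert q A)
        ≤ postVar (SigmaMat K σn2) p ∅ - postVar (SigmaMat K σn2) p {q})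
    (a : Finset D) :
    ∀ (C : Finset D) (p : D), p ∉ C → p ∉ a → Disjoint a C →
      (∀ q ∈ a, |K p q| ≤ σs2 * ξ) →
      condEnt (SigmaMat K σn2) {p} C - condEnt (SigmaMat K σn2) {p} (C ∪ a)
        ≤ (a.card : ℝ) * ((1/2) * Real.log (1 + ξ^2 / ((σn2/σs2)*(1+σn2/σs2)))) := by
  induction a using Finset.induction_on with
  | empty =>
    intro C p _ _ _ _
    simp
  | @insert q s hqs ih =>
    intro C p hpC hpa hdisj hfar
    have hpq : p ≠ q := fun h => hpa (h ▸ Finset.mem_insert_self q s)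
    have hps : p ∉ s := fun h => hpa (Finset.mem_insert_of_mem h)
    have hqC : q ∉ C := Finset.disjoint_left.mp hdisj (Finset.mem_insert_self q s)
    have hsdisj : Disjoint s (C ∪ {q}) := by
      rw [Finset.disjoint_union_right, Finset.disjoint_singleton_right]
      exact ⟨(Finset.disjoint_insert_left.mp (Finset.disjoint_left.mpr
        (fun x hx => Finset.disjoint_left.mp hdisj hx))).2, hqs⟩
    have hpCq : p ∉ C ∪ {q} := by
      simp only [Finset.mem_union, Finset.mem_singleton]
      rintro (h | h)
      exacts [hpC h, hpq h]
    have hunion : C ∪ insert q s = (C ∪ {q}) ∪ s := by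
      ext w
      simp only [Finset.mem_union, Finset.mem_insert, Finset.mem_singleton]
      tauto
    have h1 := pair_lemma hs hn hξ0 hKsymm hKpsd hKdiag hsub hpC hqC hpq
      (hfar q (Finset.mem_insert_self q s))
    have h2 := ih (C ∪ {q}) p hpCq hps hsdisj
      (fun q' hq' => hfar q' (Finset.mem_insert_of_mem hq'))
    rw [Finset.card_insert_of_notMem hqs]
    push_cast
    rw [hunion]
    calc condEnt (SigmaMat K σn2) {p} C - condEnt (SigmaMat K σn2) {p} ((C ∪ {q}) ∪ s)
        = (condEnt (SigmaMat K σn2) {p} C - condEnt (SigmaMat K σn2) {p} (C ∪ {q})) +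
          (condEnt (SigmaMat K σn2) {p} (C ∪ {q}) -
            condEnt (SigmaMat K σn2) {p} ((C ∪ {q}) ∪ s)) := by ring
      _ ≤ (1/2) * Real.log (1 + ξ^2 / ((σn2/σs2)*(1+σn2/σs2))) +
          (s.card : ℝ) * ((1/2) * Real.log (1 + ξ^2 / ((σn2/σs2)*(1+σn2/σs2)))) := by
          exact add_le_add h1 h2
      _ = ((s.card : ℝ) + 1) * ((1/2) * Real.log (1 + ξ^2 / ((σn2/σs2)*(1+σn2/σs2)))) := by
          ring

lemma condEnt_eq_form {M0 : Matrix D D ℝ} (hSpd : M0.PosDef) {b S : Finset D}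
    (hd : Disjoint S b) :
    condEnt M0 b S = (1/2) * ((b.card : ℝ) * Real.log (2*Real.pi*Real.exp 1) +
      (Real.log (subMat M0 (S ∪ b) (S ∪ b)).det - Real.log (subMat M0 S S).det)) := by
  unfold condEnt
  have hdetpos : 0 < (postCov M0 b S).det := (postCov_posDef hSpd hd).det_pos
  have hc0 : (0:ℝ) < 2*Real.pi*Real.exp 1 := two_pi_e_pos
  rw [Real.log_mul (by positivity) (ne_of_gt hdetpos), Real.log_pow]
  congr 2
  rw [det_subMat_union hSpd hd, Real.log_mul
    (ne_of_gt (subMat_posDef hSpd S).det_pos) (ne_of_gt hdetpos)]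
  ring

lemma condEnt_swap {M0 : Matrix D D ℝ} (hSpd : M0.PosDef) {a C : Finset D} {p : D}
    (hp : p ∉ C) (hpa : p ∉ a) (hac : Disjoint a C) :
    condEnt M0 a C - condEnt M0 a (C ∪ {p}) =
      condEnt M0 {p} C - condEnt M0 {p} (C ∪ a) := by
  have hCa : Disjoint C a := hac.symm
  have hCp : Disjoint C ({p} : Finset D) := by
    rw [Finset.disjoint_singleton_right]; exact hp
  have hCpa : Disjoint (C ∪ {p}) a := by
    rw [Finset.disjoint_union_left, Finset.disjoint_singleton_left]
    exact ⟨hCa, hpa⟩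
  have hCap : Disjoint (C ∪ a) ({p} : Finset D) := by
    rw [Finset.disjoint_union_left, Finset.disjoint_singleton_right,
      Finset.disjoint_singleton_right]
    exact ⟨hp, hpa⟩
  rw [condEnt_eq_form hSpd hCa, condEnt_eq_form hSpd hCpa, condEnt_eq_form hSpd hCp,
    condEnt_eq_form hSpd hCap]
  have hsets : (C ∪ {p}) ∪ a = (C ∪ a) ∪ {p} := by
    rw [Finset.union_right_comm]
  rw [hsets]
  ring

lemma chain_W
    (hs : 0 < σs2) (hn : 0 < σn2) (hξ0 : 0 ≤ ξ)
    (hKsymm : ∀ p q : D, K p q = K q p) (hKpsd : (Matrix.of K).PosSemidef)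
    (hKdiag : ∀ p : D, K p p = σs2)
    (hsub : ∀ (p q : D) (A : Finset D), p ∉ A → q ∉ A → p ≠ q →
      postVar (SigmaMat K σn2) p A - postVar (SigmaMat K σn2) p (insert q A)
        ≤ postVar (SigmaMat K σn2) p ∅ - postVar (SigmaMat K σn2) p {q})
    (a : Finset D) (W : Finset D) :
    ∀ (C : Finset D), Disjoint a C → Disjoint W a → Disjoint W C →
      (∀ p' ∈ W, ∀ q ∈ a, |K p' q| ≤ σs2 * ξ) →
      condEnt (SigmaMat K σn2) a C - condEnt (SigmaMat K σn2) a (C ∪ W)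
        ≤ (W.card : ℝ) * ((a.card : ℝ) *
          ((1/2) * Real.log (1 + ξ^2 / ((σn2/σs2)*(1+σn2/σs2))))) := by
  have hSpd : (SigmaMat K σn2).PosDef := SigmaMat_posDef hKpsd hn
  induction W using Finset.induction_on with
  | empty =>
    intro C _ _ _ _
    simp
  | @insert p W' hpW ih =>
    intro C haC hWa hWC hfar
    have hpC : p ∉ C := Finset.disjoint_left.mp hWC (Finset.mem_insert_self p W')
    have hpa : p ∉ a := Finset.disjoint_left.mp hWa (Finset.mem_insert_self p W')
    have hW'a : Disjoint W' a := Finset.disjoint_of_subset_left (Finset.subset_insert p W') hWa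
    have hW'Cp : Disjoint W' (C ∪ {p}) := by
      rw [Finset.disjoint_union_right, Finset.disjoint_singleton_right]
      exact ⟨Finset.disjoint_of_subset_left (Finset.subset_insert p W') hWC, hpW⟩
    have haCp : Disjoint a (C ∪ {p}) := by
      rw [Finset.disjoint_union_right, Finset.disjoint_singleton_right]
      exact ⟨haC, hpa⟩
    have hunion : C ∪ insert p W' = (C ∪ {p}) ∪ W' := by
      ext w
      simp only [Finset.mem_union, Finset.mem_insert, Finset.mem_singleton]
      tauto
    have h1 : condEnt (SigmaMat K σn2) a C - condEnt (SigmaMat K σn2) a (C ∪ {p})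
        ≤ (a.card : ℝ) * ((1/2) * Real.log (1 + ξ^2 / ((σn2/σs2)*(1+σn2/σs2)))) := by
      rw [condEnt_swap hSpd hpC hpa haC]
      exact chain_a hs hn hξ0 hKsymm hKpsd hKdiag hsub a C p hpC hpa haC
        (fun q hq => hfar p (Finset.mem_insert_self p W') q hq)
    have h2 := ih (C ∪ {p}) haCp hW'a hW'Cp
      (fun p' hp' q hq => hfar p' (Finset.mem_insert_of_mem hp') q hq)
    rw [Finset.card_insert_of_notMem hpW]
    push_cast
    rw [hunion]
    calc condEnt (SigmaMat K σn2) a C - condEnt (SigmaMat K σn2) a ((C ∪ {p}) ∪ W')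
        = (condEnt (SigmaMat K σn2) a C - condEnt (SigmaMat K σn2) a (C ∪ {p})) +
          (condEnt (SigmaMat K σn2) a (C ∪ {p}) -
            condEnt (SigmaMat K σn2) a ((C ∪ {p}) ∪ W')) := by ring
      _ ≤ _ := add_le_add h1 h2
      _ = ((W'.card : ℝ) + 1) * ((a.card : ℝ) *
          ((1/2) * Real.log (1 + ξ^2 / ((σn2/σs2)*(1+σn2/σs2))))) := by ring

end Pair

end Lemma7Aux

/-- **Lemma 7 of the appendix.** -/
theorem lemma7_markov_conditional_entropy_error
    {D : Type*} [Fintype D] [DecidableEq D]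
    (r n k m : ℕ) (col : D → ℕ)
    (K : D → D → ℝ) (σs2 σn2 l1 ξ : ℝ)
    (hr : 1 ≤ r) (hk1 : 1 ≤ k) (hkr : k ≤ r) (hm : 1 ≤ m)
    (hs : 0 < σs2) (hn : 0 < σn2) (hl1 : 0 < l1)
    (hξ : ξ = Real.exp (-((m : ℝ) + 1) ^ 2 / (2 * l1 ^ 2)))
    (hKsymm : ∀ p q : D, K p q = K q p)
    (hKpsd : (Matrix.of K).PosSemidef)
    (hKdiag : ∀ p : D, K p p = σs2)
    (hcol : ∀ p : D, 1 ≤ col p ∧ col p ≤ n)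
    (hcolcard : ∀ i : ℕ, 1 ≤ i → i ≤ n → (column col i).card = r)
    (hdecay : ∀ p q : D, (m : ℤ) + 1 ≤ |(col p : ℤ) - (col q : ℤ)| → |K p q| ≤ σs2 * ξ)
    (hsub : ∀ (p q : D) (A : Finset D), p ∉ A → q ∉ A → p ≠ q →
      postVar (SigmaMat K σn2) p A - postVar (SigmaMat K σn2) p (insert q A)
        ≤ postVar (SigmaMat K σn2) p ∅ - postVar (SigmaMat K σn2) p {q})
    (i : ℕ) (hi1 : 2 * m + 1 ≤ i) (hi2 : i ≤ n - 1)
    (x : ℕ → Finset D)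
    (hx : ∀ j : ℕ, 1 ≤ j → j ≤ n → x j ⊆ column col j ∧ (x j).card = k) :
    condEnt (SigmaMat K σn2) (x (i - m))
        (seg x (i - 2 * m) (i - m - 1) ∪ seg (ucomp col x) (i - 2 * m) i)
        - condEnt (SigmaMat K σn2) (x (i - m))
            (seg x 1 (i - m - 1) ∪ seg (ucomp col x) 1 n)
      ≤ ((n : ℝ) - 2 * (m : ℝ) - 1) * (r : ℝ) * (k : ℝ) * Real.log (1 + ξ ^ 2 / ((σn2 / σs2) * (1 + σn2 / σs2))) := by
  have hξ0 : 0 ≤ ξ := hξ ▸ (Real.exp_pos _).le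
  have hn2 : 2 * m + 2 ≤ n := by omega
  set a := x (i - m) with ha
  set A := seg x (i - 2 * m) (i - m - 1) ∪ seg (ucomp col x) (i - 2 * m) i with hA
  set B := seg x 1 (i - m - 1) ∪ seg (ucomp col x) 1 n with hB
  set W := B \ A with hW
  -- column facts
  have hxcol : ∀ j : ℕ, 1 ≤ j → j ≤ n → ∀ p ∈ x j, col p = j := by
    intro j h1 h2 p hp
    have := (hx j h1 h2).1 hp
    simpa [column, Finset.mem_filter] using this
  have hucol : ∀ (j : ℕ) (p : D), p ∈ ucomp col x j → col p = j := by
    intro j p hp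
    have := (Finset.mem_sdiff.mp hp).1
    simpa [column, Finset.mem_filter] using this
  have him : 1 ≤ i - m ∧ i - m ≤ n := by omega
  have hacol : ∀ q ∈ a, col q = i - m := fun q hq => hxcol _ him.1 him.2 q hq
  -- A ⊆ B
  have hAB : A ⊆ B := by
    apply Finset.union_subset_union
    · exact Finset.biUnion_subset_biUnion_of_subset_left x
        (Finset.Icc_subset_Icc (by omega) (le_refl _))
    · exact Finset.biUnion_subset_biUnion_of_subset_left (ucomp col x)
        (Finset.Icc_subset_Icc (by omega) (by omega))
  have hBAW : B = A ∪ W := (Finset.union_sdiff_of_subset hAB).symm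
  -- a disjoint from B
  have haB : Disjoint a B := by
    rw [Finset.disjoint_left]
    intro q hq hqB
    have hcq : col q = i - m := hacol q hq
    rcases Finset.mem_union.mp hqB with h | h
    · obtain ⟨j, hj, hqj⟩ := Finset.mem_biUnion.mp h
      rw [Finset.mem_Icc] at hj
      have : col q = j := hxcol j hj.1 (by omega) q hqj
      omega
    · obtain ⟨j, hj, hqj⟩ := Finset.mem_biUnion.mp h
      rw [Finset.mem_Icc] at hj
      have hj2 : col q = j := hucol j q hqj
      have : j = i - m := by omega
      subst this
      exact (Finset.mem_sdiff.mp hqj).2 hq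
  -- columns of W
  have hWcol : ∀ p ∈ W, col p + 2 * m + 1 ≤ i ∨ i + 1 ≤ col p := by
    intro p hp
    obtain ⟨hpB, hpA⟩ := Finset.mem_sdiff.mp hp
    rcases Finset.mem_union.mp hpB with h | h
    · obtain ⟨j, hj, hpj⟩ := Finset.mem_biUnion.mp h
      rw [Finset.mem_Icc] at hj
      have hcp : col p = j := hxcol j hj.1 (by omega) p hpj
      by_contra hcon
      push_neg at hcon
      apply hpA
      apply Finset.mem_union_left
      exact Finset.mem_biUnion.mpr ⟨j, Finset.mem_Icc.mpr (by omega), hpj⟩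
    · obtain ⟨j, hj, hpj⟩ := Finset.mem_biUnion.mp h
      rw [Finset.mem_Icc] at hj
      have hcp : col p = j := hucol j p hpj
      by_contra hcon
      push_neg at hcon
      apply hpA
      apply Finset.mem_union_right
      exact Finset.mem_biUnion.mpr ⟨j, Finset.mem_Icc.mpr (by omega), hpj⟩
  -- far
  have hfar : ∀ p ∈ W, ∀ q ∈ a, |K p q| ≤ σs2 * ξ := by
    intro p hp q hq
    apply hdecay
    have hcq : col q = i - m := hacol q hq
    have h1 := hcol p
    rcases hWcol p hp with h | h
    · apply le_abs.mpr
      right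
      omega
    · apply le_abs.mpr
      left
      omega
  -- disjointness
  have haA : Disjoint a A := haB.mono_right hAB
  have hWa : Disjoint W a := (haB.mono_right (Finset.sdiff_subset)).symm
  have hWA : Disjoint W A := Finset.sdiff_disjoint
  -- main bound
  have hmain := chain_W hs hn hξ0 hKsymm hKpsd hKdiag hsub a W A haA.symm.symm hWa hWA hfar
  rw [← hBAW] at hmain
  -- cardinality of W
  have hcard : W.card ≤ (n - (2 * m + 1)) * r := by
    have hsub2 : W ⊆ (Finset.Icc 1 n \ Finset.Icc (i - 2 * m) i).biUnion (column col) := by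
      intro p hp
      apply Finset.mem_biUnion.mpr
      refine ⟨col p, ?_, ?_⟩
      · rw [Finset.mem_sdiff, Finset.mem_Icc, Finset.mem_Icc]
        have h1 := hcol p
        rcases hWcol p hp with h | h <;> omega
      · simp [column, Finset.mem_filter]
    calc W.card ≤ ((Finset.Icc 1 n \ Finset.Icc (i - 2 * m) i).biUnion (column col)).card :=
          Finset.card_le_card hsub2
      _ ≤ ∑ j ∈ Finset.Icc 1 n \ Finset.Icc (i - 2 * m) i, (column col j).card :=
          Finset.card_biUnion_le
      _ ≤ ∑ _j ∈ Finset.Icc 1 n \ Finset.Icc (i - 2 * m) i, r := by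
          apply Finset.sum_le_sum
          intro j hj
          rw [Finset.mem_sdiff, Finset.mem_Icc] at hj
          exact le_of_eq (hcolcard j hj.1.1 hj.1.2)
      _ = (Finset.Icc 1 n \ Finset.Icc (i - 2 * m) i).card * r := by
          rw [Finset.sum_const, smul_eq_mul]
      _ = (n - (2 * m + 1)) * r := by
          congr 1
          rw [Finset.card_sdiff_of_subset (Finset.Icc_subset_Icc (by omega) (by omega))]
          rw [Nat.card_Icc, Nat.card_Icc]
          omega
  -- final arithmetic
  set L := Real.log (1 + ξ ^ 2 / ((σn2 / σs2) * (1 + σn2 / σs2))) with hL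
  have hL0 : 0 ≤ L := by
    apply Real.log_nonneg
    have : 0 ≤ ξ ^ 2 / ((σn2 / σs2) * (1 + σn2 / σs2)) := by positivity
    linarith
  have hak : (a.card : ℝ) = k := by
    rw [(hx (i - m) him.1 him.2).2]
  have hcardR : (W.card : ℝ) ≤ ((n : ℝ) - 2 * m - 1) * r := by
    calc (W.card : ℝ) ≤ ((n - (2 * m + 1)) * r : ℕ) := by exact_mod_cast hcard
      _ = ((n : ℝ) - 2 * m - 1) * r := by
          push_cast [Nat.cast_sub (show 2 * m + 1 ≤ n by omega)]
          ring
  have hNr0 : (0:ℝ) ≤ ((n : ℝ) - 2 * m - 1) * r := by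
    have h1 : (2 * m + 2 : ℝ) ≤ n := by exact_mod_cast hn2
    have h2 : (0:ℝ) ≤ (n : ℝ) - 2 * m - 1 := by linarith
    exact mul_nonneg h2 (Nat.cast_nonneg r)
  calc condEnt (SigmaMat K σn2) a A - condEnt (SigmaMat K σn2) a B
      ≤ (W.card : ℝ) * ((a.card : ℝ) * ((1/2) * L)) := hmain
    _ ≤ (((n : ℝ) - 2 * m - 1) * r) * ((k : ℝ) * ((1/2) * L)) := by
        rw [hak]
        apply mul_le_mul_of_nonneg_right hcardR
        positivity
    _ ≤ ((n : ℝ) - 2 * (m : ℝ) - 1) * r * k * L := by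
        have hk0 : (0:ℝ) ≤ k := Nat.cast_nonneg k
        nlinarith [mul_nonneg (mul_nonneg hNr0 hk0) hL0]
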